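/- Assume ρ(β^j) ≠ 0 for every j ∈ Z/(q^m−1)Z. Let r ∈ F^L, let (S_0,…,S_{t−1}) = rH^T, and set S(x) = Σ_{i=0}^{t−1} S_i x^i ∈ F[x]. Suppose e ∈ F^L satisfies 2·deg e ≤ t and r − e ∈ C(ρ,t), and suppose (λ, ω) ∈ F[x]² satisfies λ(0) = 1, gcd(λ, ω) = 1, deg ω < deg λ, 2·deg λ ≤ t, and λ(x)S(x) ≡ ω(x) (mod x^t). Then for every l ∈ L with e_l ≠ 0 and every j ∈ l, one has λ'(β^{−j}) ≠ 0 and the error value is recovered by e_l = −β^j · ω(β^{−j}) / (ρ(β^j) · λ'(β^{−j})), an identity in E (with e_l viewed in E via the inclusion F ⊆ E). -/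

import Mathlib

open Polynomial

noncomputable section

/-- The orbit of `j : ZMod N` under multiplication by `q`. -/
def qOrbit (N q : ℕ) (j : ZMod N) : Set (ZMod N) :=
  Set.range fun k : ℕ => (q : ZMod N) ^ k * j

/-- The set `L` of orbits of `ZMod N` under multiplication by `q`. -/
def orbitSet (N q : ℕ) : Set (Set (ZMod N)) :=
  {l | ∃ j : ZMod N, l = qOrbit N q j}

/-- `β ^ j` for a residue class `j`. -/
def bpow {E : Type*} [Monoid E] {N : ℕ} (β : E) (j : ZMod N) : E :=
  β ^ j.val

/-- The check-matrix entry `h_{i l} = ∑_{j ∈ l} ρ(β^j) β^{i j}`, as an element of `E`. -/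
def hEntry {F E : Type*} [CommSemiring F] [CommSemiring E] [Algebra F E] {N : ℕ}
    (β : E) (ρ : Polynomial F) (i : ℕ) (l : Set (ZMod N)) : E :=
  ∑ᶠ j ∈ l, Polynomial.aeval (bpow β j) ρ * bpow β j ^ i

/-- The code `C(ρ, t)` inside `F^L`. -/
def codeSet (F E : Type*) [Field F] [Field E] [Algebra F E] (N q : ℕ)
    (β : E) (ρ : Polynomial F) (t : ℕ) : Set (↥(orbitSet N q) → F) :=
  {c | ∀ i < t, ∑ᶠ l : orbitSet N q,
    algebraMap F E (c l) * hEntry β ρ i (l : Set (ZMod N)) = 0}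

open scoped Classical in
/-- `deg c = ∑_{l : c_l ≠ 0} |l|`. -/
def wdeg {F : Type*} [Zero F] {N q : ℕ} (c : ↥(orbitSet N q) → F) : ℕ :=
  ∑ᶠ l : orbitSet N q, if c l ≠ 0 then (l : Set (ZMod N)).ncard else 0

/-- The orbit containing `j`, as an element of `orbitSet N q`. -/
def orb (N q : ℕ) (j : ZMod N) : ↥(orbitSet N q) := ⟨qOrbit N q j, j, rfl⟩

private lemma natDegree_one_sub_C_mul_X_le {R : Type*} [CommRing R] [Nontrivial R] (b : R) :
    (1 - C b * X : R[X]).natDegree ≤ 1 := by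
  refine le_trans (natDegree_sub_le _ _) ?_
  simp only [natDegree_one, max_le_iff]
  refine ⟨Nat.zero_le _, le_trans natDegree_mul_le ?_⟩
  rw [natDegree_C, natDegree_X]

private lemma derivative_finset_prod' {R ι : Type*} [CommRing R] [DecidableEq ι]
    (s : Finset ι) (f : ι → R[X]) :
    derivative (∏ i ∈ s, f i) = ∑ i ∈ s, (∏ k ∈ s.erase i, f k) * derivative (f i) := by
  induction s using Finset.induction_on with
  | empty => simp
  | @insert a s ha ih =>
    rw [Finset.prod_insert ha, derivative_mul, ih, Finset.sum_insert ha,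
      Finset.erase_insert ha, Finset.mul_sum]
    congr 1
    · ring
    · apply Finset.sum_congr rfl
      intro i hi
      have hia : a ≠ i := fun h => ha (h ▸ hi)
      rw [Finset.erase_insert_of_ne hia,
        Finset.prod_insert (fun h => ha (Finset.mem_of_mem_erase h))]
      ring

private theorem decode_aux (q m N : ℕ) (hm : 0 < m) (hNpos : 0 < N)
    (F E : Type*) [Field F] [Field E] [Algebra F E]
    (β : E) (hβ : orderOf β = N) (hqmod : (q : ZMod N) ^ m = 1)
    (ρ : Polynomial F) (t : ℕ) (ht : 0 < t)
    (hρ : ∀ j : ZMod N, Polynomial.aeval (bpow β j) ρ ≠ 0)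
    (r : ↥(orbitSet N q) → F)
    (S : Polynomial F) (hSdeg : S.degree < t)
    (hS : ∀ i < t, algebraMap F E (S.coeff i) =
      ∑ᶠ l : orbitSet N q,
        algebraMap F E (r l) * hEntry β ρ i (l : Set (ZMod N)))
    (e : ↥(orbitSet N q) → F) (he : 2 * wdeg e ≤ t)
    (hre : r - e ∈ codeSet F E N q β ρ t)
    (lam om : Polynomial F) (hlam0 : lam.coeff 0 = 1) (hcop : IsCoprime lam om)
    (homdeg : om.degree < lam.degree) (hlamt : 2 * lam.natDegree ≤ t)
    (hkey : (X : Polynomial F) ^ t ∣ lam * S - om) :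
    ∀ l : ↥(orbitSet N q), e l ≠ 0 → ∀ j ∈ (l : Set (ZMod N)),
      Polynomial.aeval ((bpow β j)⁻¹) (derivative lam) ≠ 0 ∧
      algebraMap F E (e l) =
        -(bpow β j * Polynomial.aeval ((bpow β j)⁻¹) om) /
          (Polynomial.aeval (bpow β j) ρ *
            Polynomial.aeval ((bpow β j)⁻¹) (derivative lam)) := by
  classical
  haveI : NeZero N := ⟨hNpos.ne'⟩
  have hβ1 : β ^ N = 1 := by rw [← hβ]; exact pow_orderOf_eq_one β
  have hβ0 : β ≠ 0 := by
    intro h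
    rw [h, zero_pow hNpos.ne'] at hβ1
    exact zero_ne_one hβ1
  have hbp0 : ∀ j : ZMod N, bpow β j ≠ 0 := fun j => pow_ne_zero _ hβ0
  have hbpinj : Function.Injective (fun j : ZMod N => bpow β j) := by
    intro j k h
    simp only [bpow] at h
    have h2 := pow_injOn_Iio_orderOf (x := β)
      (Set.mem_Iio.mpr (by rw [hβ]; exact ZMod.val_lt j))
      (Set.mem_Iio.mpr (by rw [hβ]; exact ZMod.val_lt k)) h
    exact ZMod.val_injective N h2
  -- orbit machinery
  have hmem_self : ∀ j : ZMod N, j ∈ qOrbit N q j := fun j => ⟨0, by simp⟩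
  have horbit_eq : ∀ j k : ZMod N, j ∈ qOrbit N q k → qOrbit N q j = qOrbit N q k := by
    intro j k hjk
    obtain ⟨a, ha⟩ := hjk
    change (q : ZMod N) ^ a * k = j at ha
    ext x
    simp only [qOrbit, Set.mem_range]
    constructor
    · rintro ⟨b, hb⟩
      exact ⟨b + a, by rw [pow_add, mul_assoc, ha, hb]⟩
    · rintro ⟨b, hb⟩
      refine ⟨b + a * (m - 1), ?_⟩
      have h2 : b + a * (m - 1) + a = b + m * a := by
        have h3 : m - 1 + 1 = m := Nat.succ_pred_eq_of_pos hm
        calc b + a * (m - 1) + a = b + a * ((m - 1) + 1) := by ring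
          _ = b + m * a := by rw [h3]; ring
      rw [← hb, ← ha, ← mul_assoc, ← pow_add, h2, pow_add, pow_mul, hqmod, one_pow, mul_one]
  have hmem_iff : ∀ (j : ZMod N) (l : ↥(orbitSet N q)),
      j ∈ (l : Set (ZMod N)) ↔ orb N q j = l := by
    rintro j ⟨l, k, rfl⟩
    constructor
    · intro hj
      exact Subtype.ext (horbit_eq j k hj)
    · intro h
      have h3 : j ∈ (↑(orb N q j) : Set (ZMod N)) := hmem_self j
      rw [h] at h3
      exact h3
  haveI : Fintype ↥(orbitSet N q) := Fintype.ofFinite _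
  have hfiber : ∀ l : ↥(orbitSet N q),
      (l : Set (ZMod N)).toFinset = Finset.univ.filter (fun j => orb N q j = l) := by
    intro l
    ext j
    simp only [Set.mem_toFinset, Finset.mem_filter, Finset.mem_univ, true_and]
    exact hmem_iff j l
  have hEntry_eq : ∀ (i : ℕ) (l : ↥(orbitSet N q)), hEntry β ρ i (l : Set (ZMod N)) =
      ∑ j ∈ (l : Set (ZMod N)).toFinset, Polynomial.aeval (bpow β j) ρ * bpow β j ^ i := by
    intro i l
    have h1 : hEntry β ρ i (l : Set (ZMod N)) =
        ∑ᶠ j ∈ (((l : Set (ZMod N)).toFinset : Finset (ZMod N)) : Set (ZMod N)),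
          Polynomial.aeval (bpow β j) ρ * bpow β j ^ i := by
      rw [Set.coe_toFinset]
      rfl
    rw [h1, finsum_mem_coe_finset]
  -- the structure lemma
  have hsum : ∀ (c : ↥(orbitSet N q) → F) (i : ℕ),
      (∑ᶠ l : orbitSet N q, algebraMap F E (c l) * hEntry β ρ i (l : Set (ZMod N))) =
      ∑ j : ZMod N, algebraMap F E (c (orb N q j)) *
        (Polynomial.aeval (bpow β j) ρ * bpow β j ^ i) := by
    intro c i
    rw [finsum_eq_sum_of_fintype]
    rw [← Finset.sum_fiberwise_of_maps_to (g := orb N q) (t := Finset.univ)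
      (fun j _ => Finset.mem_univ _)]
    apply Finset.sum_congr rfl
    intro l _
    rw [hEntry_eq, hfiber, Finset.mul_sum]
    apply Finset.sum_congr rfl
    intro j hj
    rw [(Finset.mem_filter.mp hj).2]
  -- error support
  set T : Finset (ZMod N) := Finset.univ.filter (fun j => e (orb N q j) ≠ 0) with hTdef
  set Ej : ZMod N → E :=
    fun j => algebraMap F E (e (orb N q j)) * Polynomial.aeval (bpow β j) ρ with hEjdef
  have hφinj : Function.Injective (algebraMap F E) := (algebraMap F E).injective
  have hEjne : ∀ j ∈ T, Ej j ≠ 0 := by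
    intro j hj
    apply mul_ne_zero
    · intro h
      exact (Finset.mem_filter.mp hj).2 (hφinj (by rw [h, map_zero]))
    · exact hρ j
  -- wdeg e = T.card
  have he' : 2 * T.card ≤ t := by
    have hwd : wdeg e = T.card := by
      have h0 : wdeg e = ∑ᶠ l : orbitSet N q,
          if e l ≠ 0 then (l : Set (ZMod N)).ncard else 0 := rfl
      rw [h0, finsum_eq_sum_of_fintype,
        Finset.card_eq_sum_card_fiberwise (f := orb N q) (t := Finset.univ)
          (fun j _ => Finset.mem_univ _)]
      apply Finset.sum_congr rfl
      intro l _
      by_cases h : e l ≠ 0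
      · rw [if_pos h, Set.ncard_eq_toFinset_card' _, hfiber l]
        congr 1
        ext j
        constructor
        · intro hj
          have hj' := (Finset.mem_filter.mp hj).2
          exact Finset.mem_filter.mpr
            ⟨Finset.mem_filter.mpr ⟨Finset.mem_univ _, by rw [hj']; exact h⟩, hj'⟩
        · intro hj
          exact Finset.mem_filter.mpr ⟨Finset.mem_univ _, (Finset.mem_filter.mp hj).2⟩
      · rw [if_neg h]
        push_neg at h
        symm
        rw [Finset.card_eq_zero, Finset.filter_eq_empty_iff]
        intro j hj
        intro hjl
        exact (Finset.mem_filter.mp hj).2 (by rw [hjl]; exact h)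
    rw [← hwd]; exact he
  -- syndromes of e
  have hsyn : ∀ i < t, algebraMap F E (S.coeff i) = ∑ j ∈ T, Ej j * bpow β j ^ i := by
    intro i hi
    have h1 := hS i hi
    have h2 : (∑ᶠ l : orbitSet N q,
        algebraMap F E ((r - e) l) * hEntry β ρ i (l : Set (ZMod N))) = 0 := hre i hi
    rw [hsum r i] at h1
    rw [hsum (r - e) i] at h2
    have h2' : ∑ j : ZMod N, algebraMap F E (r (orb N q j)) *
          (Polynomial.aeval (bpow β j) ρ * bpow β j ^ i)
        = ∑ j : ZMod N, algebraMap F E (e (orb N q j)) *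
          (Polynomial.aeval (bpow β j) ρ * bpow β j ^ i) := by
      rw [← sub_eq_zero, ← Finset.sum_sub_distrib, ← h2]
      apply Finset.sum_congr rfl
      intro j _
      simp only [Pi.sub_apply, map_sub]
      ring
    rw [h1, h2']
    have h4 : ∀ x ∈ Finset.univ, x ∉ T →
        algebraMap F E (e (orb N q x)) *
          (Polynomial.aeval (bpow β x) ρ * bpow β x ^ i) = 0 := by
      intro x _ hx
      have h5 : e (orb N q x) = 0 := by
        by_contra hne
        exact hx (Finset.mem_filter.mpr ⟨Finset.mem_univ _, hne⟩)
      rw [h5, map_zero, zero_mul]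
    rw [← Finset.sum_subset (Finset.subset_univ T) h4]
    apply Finset.sum_congr rfl
    intro j _
    simp only [hEjdef]
    ring
  -- polynomials over E
  set Λ : E[X] := ∏ j ∈ T, (1 - C (bpow β j) * X) with hΛdef
  set Ω : E[X] := ∑ j ∈ T, C (Ej j) * ∏ k ∈ T.erase j, (1 - C (bpow β k) * X) with hΩdef
  set lamE : E[X] := lam.map (algebraMap F E) with hlamEdef
  set omE : E[X] := om.map (algebraMap F E) with homEdef
  set SE : E[X] := S.map (algebraMap F E) with hSEdef
  have hSnat : S.natDegree < t := by
    rcases eq_or_ne S 0 with h | h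
    · simpa [h] using ht
    · exact (natDegree_lt_iff_degree_lt h).mpr hSdeg
  have hSEeq : SE = ∑ j ∈ T, C (Ej j) * ∑ i ∈ Finset.range t, (C (bpow β j) * X) ^ i := by
    have h0 : S = ∑ i ∈ Finset.range t, monomial i (S.coeff i) := as_sum_range' S t hSnat
    rw [hSEdef]
    conv_lhs => rw [h0]
    rw [Polynomial.map_sum]
    simp only [Polynomial.map_monomial]
    simp only [← Polynomial.C_mul_X_pow_eq_monomial]
    calc ∑ i ∈ Finset.range t, C (algebraMap F E (S.coeff i)) * X ^ i
        = ∑ i ∈ Finset.range t, ∑ j ∈ T, C (Ej j) * (C (bpow β j) * X) ^ i := by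
          apply Finset.sum_congr rfl
          intro i hi
          rw [hsyn i (Finset.mem_range.mp hi), map_sum, Finset.sum_mul]
          apply Finset.sum_congr rfl
          intro j _
          rw [map_mul, map_pow, mul_pow]
          ring
      _ = ∑ j ∈ T, C (Ej j) * ∑ i ∈ Finset.range t, (C (bpow β j) * X) ^ i := by
          rw [Finset.sum_comm]
          simp [Finset.mul_sum]
  have hdvd1 : (X : E[X]) ^ t ∣ Λ * SE - Ω := by
    have hrw : Λ * SE - Ω = ∑ j ∈ T, C (Ej j) * (∏ k ∈ T.erase j, (1 - C (bpow β k) * X)) *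
        (-((C (bpow β j) * X) ^ t)) := by
      rw [hSEeq, Finset.mul_sum, hΩdef, ← Finset.sum_sub_distrib]
      apply Finset.sum_congr rfl
      intro j hj
      have hfac : Λ = (1 - C (bpow β j) * X) * ∏ k ∈ T.erase j, (1 - C (bpow β k) * X) :=
        (Finset.mul_prod_erase T _ hj).symm
      have hgeo : (1 - C (bpow β j) * X) * ∑ i ∈ Finset.range t, (C (bpow β j) * X) ^ i
          = 1 - (C (bpow β j) * X) ^ t := by
        have h := geom_sum_mul (C (bpow β j) * X) t
        linear_combination -h
      rw [hfac]
      linear_combination (C (Ej j) * ∏ k ∈ T.erase j, (1 - C (bpow β k) * X)) * hgeo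
    rw [hrw]
    apply Finset.dvd_sum
    intro j hj
    exact (((dvd_neg).mpr (by rw [mul_pow]; exact dvd_mul_left _ _)).mul_left _)
  have hdvd2 : (X : E[X]) ^ t ∣ lamE * SE - omE := by
    obtain ⟨u, hu⟩ := hkey
    refine ⟨u.map (algebraMap F E), ?_⟩
    have h := congrArg (Polynomial.map (algebraMap F E)) hu
    simpa [Polynomial.map_mul, Polynomial.map_sub, Polynomial.map_pow] using h
  -- degree bounds and the main identity
  have hmain : Λ * omE = lamE * Ω := by
    have hdvd3 : (X : E[X]) ^ t ∣ Λ * omE - lamE * Ω := by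
      have hid : Λ * omE - lamE * Ω = lamE * (Λ * SE - Ω) - Λ * (lamE * SE - omE) := by ring
      rw [hid]
      exact dvd_sub (hdvd1.mul_left _) (hdvd2.mul_left _)
    by_contra hne
    have hne' : Λ * omE - lamE * Ω ≠ 0 := sub_ne_zero.mpr hne
    have hle := Polynomial.natDegree_le_of_dvd hdvd3 hne'
    rw [natDegree_X_pow] at hle
    have hnd_prod : ∀ s : Finset (ZMod N),
        (∑ j ∈ s, (1 - C (bpow β j) * X : E[X]).natDegree) ≤ s.card := by
      intro s
      have h := Finset.sum_le_sum
        (f := fun j : ZMod N => (1 - C (bpow β j) * X : E[X]).natDegree)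
        (g := fun _ => (1 : ℕ)) (s := s) (fun k _ => natDegree_one_sub_C_mul_X_le _)
      simpa using h
    have hb0 : Λ.natDegree ≤ T.card := by
      rw [hΛdef]
      exact le_trans (Polynomial.natDegree_prod_le _ _) (hnd_prod T)
    have hlamnd : lamE.natDegree = lam.natDegree := by
      rw [hlamEdef]; exact natDegree_map _
    have homnd : omE.natDegree = om.natDegree := by
      rw [homEdef]; exact natDegree_map _
    have h1 : (Λ * omE).natDegree < t := by
      rcases eq_or_ne om 0 with h | h
      · rw [homEdef, h, Polynomial.map_zero, mul_zero, natDegree_zero]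
        omega
      · have homlt : om.natDegree < lam.natDegree := natDegree_lt_natDegree h homdeg
        refine lt_of_le_of_lt natDegree_mul_le ?_
        rw [homnd]
        omega
    have h2 : (lamE * Ω).natDegree < t := by
      rcases Finset.eq_empty_or_nonempty T with h | h
      · rw [hΩdef, h, Finset.sum_empty, mul_zero, natDegree_zero]
        omega
      · have hc1 : 1 ≤ T.card := Finset.card_pos.mpr h
        have hΩnd : Ω.natDegree ≤ T.card - 1 := by
          rw [hΩdef]
          apply Polynomial.natDegree_sum_le_of_forall_le
          intro j hj
          refine le_trans natDegree_mul_le ?_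
          rw [natDegree_C, zero_add]
          refine le_trans (Polynomial.natDegree_prod_le _ _) ?_
          refine le_trans (hnd_prod _) ?_
          rw [Finset.card_erase_of_mem hj]
        refine lt_of_le_of_lt natDegree_mul_le ?_
        rw [hlamnd]
        omega
    have h3 := Polynomial.natDegree_sub_le (Λ * omE) (lamE * Ω)
    omega
  -- nonvanishing products
  have hones : ∀ j ∈ T, ∀ k ∈ T.erase j, (1 : E) - bpow β k * (bpow β j)⁻¹ ≠ 0 := by
    intro j _ k hk h
    have hkj : k ≠ j := (Finset.mem_erase.mp hk).1
    apply hkj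
    apply hbpinj
    have h1 : (1 : E) = bpow β k * (bpow β j)⁻¹ := sub_eq_zero.mp h
    exact (mul_inv_eq_one₀ (hbp0 j)).mp h1.symm
  have hΩeval : ∀ j ∈ T, Ω.eval (bpow β j)⁻¹ =
      Ej j * ∏ k ∈ T.erase j, (1 - bpow β k * (bpow β j)⁻¹) := by
    intro j hj
    rw [hΩdef, Polynomial.eval_finset_sum]
    rw [Finset.sum_eq_single j]
    · simp [Polynomial.eval_prod]
    · intro k hk hkj
      simp only [Polynomial.eval_mul, Polynomial.eval_C, Polynomial.eval_prod]
      apply mul_eq_zero_of_right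
      have hjk : j ∈ T.erase k := Finset.mem_erase.mpr ⟨hkj.symm, hj⟩
      apply Finset.prod_eq_zero hjk
      simp [mul_inv_cancel₀ (hbp0 j)]
    · intro h
      exact absurd hj h
  have hΩne : ∀ j ∈ T, Ω.eval (bpow β j)⁻¹ ≠ 0 := by
    intro j hj
    rw [hΩeval j hj]
    exact mul_ne_zero (hEjne j hj) (Finset.prod_ne_zero_iff.mpr (hones j hj))
  -- coprimality of Λ and Ω
  have hcopΛΩ : IsCoprime Λ Ω := by
    rw [hΛdef]
    apply IsCoprime.prod_left
    intro j hj
    have hCC : C ((bpow β j)⁻¹) * C (bpow β j) = (1 : E[X]) := by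
      rw [← C_mul, inv_mul_cancel₀ (hbp0 j), C_1]
    have hfac : (1 : E[X]) - C (bpow β j) * X = (X - C ((bpow β j)⁻¹)) * (-C (bpow β j)) := by
      linear_combination -hCC
    rw [hfac]
    apply IsCoprime.mul_left
    · rw [(Polynomial.irreducible_X_sub_C _).coprime_iff_not_dvd,
        Polynomial.dvd_iff_isRoot]
      exact hΩne j hj
    · exact ⟨-C ((bpow β j)⁻¹), 0, by
        rw [zero_mul, add_zero, neg_mul_neg, hCC]⟩
  have hcopE : IsCoprime lamE omE := by
    have h := hcop.map (Polynomial.mapRingHom (algebraMap F E))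
    simpa using h
  -- identification lamE = Λ, omE = Ω
  have hΛ0 : Λ.eval 0 = 1 := by
    rw [hΛdef, Polynomial.eval_prod]
    apply Finset.prod_eq_one
    intro j _
    simp
  have hΛne : Λ ≠ 0 := fun h => by simp [h] at hΛ0
  have hlamE0 : lamE.eval 0 = 1 := by
    rw [← Polynomial.coeff_zero_eq_eval_zero, hlamEdef, Polynomial.coeff_map, hlam0, map_one]
  have hd1 : Λ ∣ lamE := hcopΛΩ.dvd_of_dvd_mul_right ⟨omE, hmain.symm⟩
  have hd2 : lamE ∣ Λ := hcopE.dvd_of_dvd_mul_right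
    (by rw [hmain]; exact dvd_mul_right _ _)
  have hΛlam : lamE = Λ := by
    obtain ⟨u, hu⟩ := hd1
    obtain ⟨v, hv⟩ := hd2
    have huv : u * v = 1 := by
      have h : Λ * (u * v) = Λ * 1 := by
        rw [mul_one, ← mul_assoc, ← hu, ← hv]
      exact mul_left_cancel₀ hΛne h
    have hu0 : u.eval 0 = 1 := by
      have h := congrArg (Polynomial.eval 0) hu
      rw [Polynomial.eval_mul, hΛ0, one_mul, hlamE0] at h
      exact h.symm
    have hu1 : u = 1 := by
      have hunit : IsUnit u := IsUnit.of_mul_eq_one v huv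
      obtain ⟨c, -, hc⟩ := Polynomial.isUnit_iff.mp hunit
      rw [← hc, Polynomial.eval_C] at hu0
      rw [← hc, hu0, C_1]
    rw [hu, hu1, mul_one]
  have hΩom : omE = Ω := by
    apply mul_left_cancel₀ hΛne
    rw [hmain, hΛlam]
  -- Forney's formula
  intro l₀ hel₀ j₀ hj₀
  have horb : orb N q j₀ = l₀ := (hmem_iff j₀ l₀).mp hj₀
  have hj₀T : j₀ ∈ T := Finset.mem_filter.mpr ⟨Finset.mem_univ _, by rw [horb]; exact hel₀⟩
  have hPne : (∏ k ∈ T.erase j₀, (1 - bpow β k * (bpow β j₀)⁻¹)) ≠ 0 :=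
    Finset.prod_ne_zero_iff.mpr (hones j₀ hj₀T)
  have hder : (derivative Λ).eval (bpow β j₀)⁻¹ =
      (∏ k ∈ T.erase j₀, (1 - bpow β k * (bpow β j₀)⁻¹)) * (-(bpow β j₀)) := by
    rw [hΛdef, derivative_finset_prod', Polynomial.eval_finset_sum]
    rw [Finset.sum_eq_single j₀]
    · have hd : derivative (1 - C (bpow β j₀) * X) = -C (bpow β j₀) := by
        simp
      rw [hd]
      simp [Polynomial.eval_prod]
    · intro k hk hkj
      simp only [Polynomial.eval_mul, Polynomial.eval_prod]
      apply mul_eq_zero_of_left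
      have hjk : j₀ ∈ T.erase k := Finset.mem_erase.mpr ⟨hkj.symm, hj₀T⟩
      apply Finset.prod_eq_zero hjk
      simp [mul_inv_cancel₀ (hbp0 j₀)]
    · intro h
      exact absurd hj₀T h
  have haev : ∀ p : Polynomial F, Polynomial.aeval ((bpow β j₀)⁻¹) p =
      (p.map (algebraMap F E)).eval (bpow β j₀)⁻¹ := by
    intro p
    rw [Polynomial.aeval_def, Polynomial.eval_map]
  have hderlam : Polynomial.aeval ((bpow β j₀)⁻¹) (derivative lam) =
      (∏ k ∈ T.erase j₀, (1 - bpow β k * (bpow β j₀)⁻¹)) * (-(bpow β j₀)) := by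
    rw [haev, ← Polynomial.derivative_map, ← hlamEdef, hΛlam, hder]
  have homeval : Polynomial.aeval ((bpow β j₀)⁻¹) om =
      Ej j₀ * ∏ k ∈ T.erase j₀, (1 - bpow β k * (bpow β j₀)⁻¹) := by
    rw [haev, ← homEdef, hΩom, hΩeval j₀ hj₀T]
  have hEjval : Ej j₀ = algebraMap F E (e l₀) * Polynomial.aeval (bpow β j₀) ρ := by
    simp only [hEjdef]
    rw [horb]
  constructor
  · rw [hderlam]
    exact mul_ne_zero hPne (neg_ne_zero.mpr (hbp0 j₀))
  · rw [homeval, hderlam, hEjval]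
    have hne : Polynomial.aeval (bpow β j₀) ρ *
        ((∏ k ∈ T.erase j₀, (1 - bpow β k * (bpow β j₀)⁻¹)) * (-(bpow β j₀))) ≠ 0 :=
      mul_ne_zero (hρ j₀) (mul_ne_zero hPne (neg_ne_zero.mpr (hbp0 j₀)))
    rw [eq_div_iff hne]
    field_simp

/-- Error evaluation: under the hypotheses of the decoding lemma, for every orbit `l` with
`e_l ≠ 0` and every `j ∈ l`, one has `λ'(β^{−j}) ≠ 0` and
`e_l = −β^j ω(β^{−j}) / (ρ(β^j) λ'(β^{−j}))`, an identity in `E`. -/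
theorem decode_error_values (q m : ℕ) (hm : 0 < m) (hqm : Nat.Coprime q m)
    (F E : Type*) [Field F] [Field E] [Fintype F] [Fintype E] [Algebra F E]
    (hF : Fintype.card F = q) (hE : Fintype.card E = q ^ m)
    (β : E) (hβ : orderOf β = q ^ m - 1) (ρ : Polynomial F) (t : ℕ) (ht : 0 < t)
    (hρ : ∀ j : ZMod (q ^ m - 1), Polynomial.aeval (bpow β j) ρ ≠ 0)
    (r : ↥(orbitSet (q ^ m - 1) q) → F)
    (S : Polynomial F) (hSdeg : S.degree < t)
    (hS : ∀ i < t, algebraMap F E (S.coeff i) =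
      ∑ᶠ l : orbitSet (q ^ m - 1) q,
        algebraMap F E (r l) * hEntry β ρ i (l : Set (ZMod (q ^ m - 1))))
    (e : ↥(orbitSet (q ^ m - 1) q) → F) (he : 2 * wdeg e ≤ t)
    (hre : r - e ∈ codeSet F E (q ^ m - 1) q β ρ t)
    (lam om : Polynomial F) (hlam0 : lam.coeff 0 = 1) (hcop : IsCoprime lam om)
    (homdeg : om.degree < lam.degree) (hlamt : 2 * lam.natDegree ≤ t)
    (hkey : (X : Polynomial F) ^ t ∣ lam * S - om) :
    ∀ l : ↥(orbitSet (q ^ m - 1) q), e l ≠ 0 → ∀ j ∈ (l : Set (ZMod (q ^ m - 1))),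
      Polynomial.aeval ((bpow β j)⁻¹) (derivative lam) ≠ 0 ∧
      algebraMap F E (e l) =
        -(bpow β j * Polynomial.aeval ((bpow β j)⁻¹) om) /
          (Polynomial.aeval (bpow β j) ρ *
            Polynomial.aeval ((bpow β j)⁻¹) (derivative lam)) := by
  have hq1 : 1 < q := hF ▸ Fintype.one_lt_card
  have hqm1 : 1 < q ^ m := hE ▸ Fintype.one_lt_card
  have hqmod : (q : ZMod (q ^ m - 1)) ^ m = 1 := by
    have h2 : (((q : ℕ) ^ m : ℕ) : ZMod (q ^ m - 1)) =
        (((q ^ m - 1) + 1 : ℕ) : ZMod (q ^ m - 1)) := by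
      congr 1
      omega
    calc ((q : ℕ) : ZMod (q ^ m - 1)) ^ m = (((q : ℕ) ^ m : ℕ) : ZMod (q ^ m - 1)) := by
          push_cast; ring
      _ = ((((q ^ m - 1) + 1 : ℕ)) : ZMod (q ^ m - 1)) := h2
      _ = 1 := by rw [Nat.cast_add, Nat.cast_one, ZMod.natCast_self, zero_add]
  exact decode_aux q m (q ^ m - 1) hm (by omega) F E β hβ hqmod ρ t ht hρ r S hSdeg hS
    e he hre lam om hlam0 hcop homdeg hlamt hkey
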